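/- Let E be an n-perfect pseudo-effect algebra with n-decomposition (E₀,...,Eₙ). Then (E₀; +, 0) is a cancellative positively ordered monoid that is the positive cone of a unique (up to isomorphism) directed partially ordered group G, i.e., there exists a directed po-group G with G⁺ = E₀. -/

import Mathlib

/-- A pseudo-effect algebra (PEA): a structure with a partial addition `add`
(with domain of definition `D`), a zero and a one, satisfying (PE1)-(PE4)
together with the (derivable) neutrality of zero. -/
structure PEA (E : Type) where
  /-- `D a b` means that the partial sum `a + b` is defined. -/
  D : E → E → Prop
  /-- The partial addition (its value is relevant only when `D a b` holds). -/
  add : E → E → E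
  zero : E
  one : E
  /-- (PE1), definedness part. -/
  assoc_defined : ∀ a b c, (D a b ∧ D (add a b) c) ↔ (D b c ∧ D a (add b c))
  /-- (PE1), equality part. -/
  assoc_eq : ∀ a b c, D a b → D (add a b) c → add (add a b) c = add a (add b c)
  /-- (PE2), right complement. -/
  compl_right : ∀ a, ∃! d, D a d ∧ add a d = one
  /-- (PE2), left complement. -/
  compl_left : ∀ a, ∃! e, D e a ∧ add e a = one
  /-- (PE3). -/
  pe3 : ∀ a b, D a b →
    (∃ d, D d a ∧ add d a = add a b) ∧ (∃ e, D b e ∧ add b e = add a b)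
  /-- (PE4). -/
  pe4_right : ∀ a, D a one → a = zero
  pe4_left : ∀ a, D one a → a = zero
  D_zero_right : ∀ a, D a zero
  D_zero_left : ∀ a, D zero a
  add_zero : ∀ a, add a zero = a
  zero_add : ∀ a, add zero a = a

namespace PEA

variable {E : Type} (P : PEA E)

/-- The induced partial order: `a ≤ b` iff `a + c = b` for some `c`. -/
def le (a b : E) : Prop := ∃ c, P.D a c ∧ P.add a c = b

/-- The left complement `a⁻`, the unique element with `a⁻ + a = 1`. -/
noncomputable def lneg (a : E) : E := (P.compl_left a).choose

/-- The right complement `a~`, the unique element with `a + a~ = 1`. -/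
noncomputable def rneg (a : E) : E := (P.compl_right a).choose

/-- `E` is weakly commutative if `a + b` is defined iff `b + a` is defined. -/
def WeaklyCommutative : Prop := ∀ a b, P.D a b ↔ P.D b a

/-- `E` is symmetric if the two complements coincide. -/
def Symmetric : Prop := ∀ a, P.lneg a = P.rneg a

/-- A state on a PEA: a `[0,1]`-valued map, additive on existing sums, sending
`0 ↦ 0` and `1 ↦ 1`. -/
def IsState (s : E → ℝ) : Prop :=
  s P.zero = 0 ∧ s P.one = 1 ∧ (∀ a, 0 ≤ s a ∧ s a ≤ 1) ∧
    ∀ a b, P.D a b → s (P.add a b) = s a + s b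

/-- An `(n+1)`-valued discrete state: a state whose range is `{0, 1/n, …, 1}`. -/
def IsDiscreteState (n : ℕ) (s : E → ℝ) : Prop :=
  P.IsState s ∧ Set.range s = {x : ℝ | ∃ i ≤ n, x = (i : ℝ) / n}

/-- An ideal: a nonempty downward closed subset closed under existing sums. -/
def IsIdeal (I : Set E) : Prop :=
  I.Nonempty ∧ (∀ a i, i ∈ I → P.le a i → a ∈ I) ∧
    ∀ i j, i ∈ I → j ∈ I → P.D i j → P.add i j ∈ I

/-- A normal ideal: `a + i = j + a` implies `i ∈ I ↔ j ∈ I`. -/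
def IsNormalIdeal (I : Set E) : Prop :=
  P.IsIdeal I ∧ ∀ a i j, P.D a i → P.D j a → P.add a i = P.add j a → (i ∈ I ↔ j ∈ I)

/-- A maximal ideal: proper and not properly contained in a proper ideal. -/
def IsMaximalIdeal (I : Set E) : Prop :=
  P.IsIdeal I ∧ P.one ∉ I ∧ ∀ J, P.IsIdeal J → P.one ∉ J → I ⊆ J → I = J

/-- `n`-fold partial multiple of an element. -/
def nmul : ℕ → E → E
  | 0, _ => P.zero
  | k + 1, a => P.add (nmul k a) a

/-- Definedness of the `n`-fold partial multiple. -/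
def nmulD : ℕ → E → Prop
  | 0, _ => True
  | k + 1, a => nmulD k a ∧ P.D (P.nmul k a) a

/-- The set of elements of infinite isotropic index. -/
def Infinit : Set E := {a | ∀ k, P.nmulD k a}

/-- An `n`-decomposition of a PEA. -/
def IsNDecomp (n : ℕ) (F : ℕ → Set E) : Prop :=
  (∀ i, i ≤ n → (F i).Nonempty) ∧
  (∀ i j, i ≤ n → j ≤ n → i ≠ j → F i ∩ F j = ∅) ∧
  ((⋃ i ∈ Set.Iic n, F i) = Set.univ) ∧
  (∀ i, i ≤ n → P.lneg '' F i = F (n - i) ∧ P.rneg '' F i = F (n - i)) ∧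
  (∀ i j, i ≤ n → j ≤ n → ∀ x ∈ F i, ∀ y ∈ F j, P.D x y →
     i + j ≤ n ∧ P.add x y ∈ F (i + j))

/-- An `n`-perfect PEA: an `n`-decomposition with all sums `Eᵢ + Eⱼ`, `i+j < n`,
existing, and whose bottom slice is the unique maximal ideal. -/
def IsNPerfect (n : ℕ) (F : ℕ → Set E) : Prop :=
  P.IsNDecomp n F ∧
  (∀ i j, i + j < n → ∀ x ∈ F i, ∀ y ∈ F j, P.D x y) ∧
  (P.IsMaximalIdeal (F 0) ∧ ∀ J, P.IsMaximalIdeal J → J = F 0)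

end PEA

namespace Stmt14Aux

open PEA

variable {E : Type} (P : PEA E)

theorem lneg_spec (a : E) : P.D (P.lneg a) a ∧ P.add (P.lneg a) a = P.one :=
  (P.compl_left a).choose_spec.1

theorem lneg_uniq {a e : E} (h1 : P.D e a) (h2 : P.add e a = P.one) : e = P.lneg a :=
  (P.compl_left a).choose_spec.2 e ⟨h1, h2⟩

theorem rneg_spec (a : E) : P.D a (P.rneg a) ∧ P.add a (P.rneg a) = P.one :=
  (P.compl_right a).choose_spec.1

theorem rneg_uniq {a d : E} (h1 : P.D a d) (h2 : P.add a d = P.one) : d = P.rneg a :=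
  (P.compl_right a).choose_spec.2 d ⟨h1, h2⟩

theorem cancel_left {a b c : E} (h1 : P.D a b) (h2 : P.D a c)
    (h : P.add a b = P.add a c) : b = c := by
  obtain ⟨hDlx, hlx⟩ := lneg_spec P (P.add a b)
  have hb : P.D (P.lneg (P.add a b)) a ∧ P.D (P.add (P.lneg (P.add a b)) a) b :=
    (P.assoc_defined (P.lneg (P.add a b)) a b).mpr ⟨h1, hDlx⟩
  have hbe : P.add (P.add (P.lneg (P.add a b)) a) b = P.one := by
    rw [P.assoc_eq _ _ _ hb.1 hb.2, hlx]
  have hc : P.D (P.lneg (P.add a b)) a ∧ P.D (P.add (P.lneg (P.add a b)) a) c :=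
    (P.assoc_defined (P.lneg (P.add a b)) a c).mpr ⟨h2, by rw [← h]; exact hDlx⟩
  have hce : P.add (P.add (P.lneg (P.add a b)) a) c = P.one := by
    rw [P.assoc_eq _ _ _ hc.1 hc.2, ← h, hlx]
  rw [rneg_uniq P hb.2 hbe, rneg_uniq P hc.2 hce]

theorem cancel_right {a b c : E} (h1 : P.D b a) (h2 : P.D c a)
    (h : P.add b a = P.add c a) : b = c := by
  obtain ⟨hDrx, hrx⟩ := rneg_spec P (P.add b a)
  have hb : P.D a (P.rneg (P.add b a)) ∧ P.D b (P.add a (P.rneg (P.add b a))) :=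
    (P.assoc_defined b a (P.rneg (P.add b a))).mp ⟨h1, hDrx⟩
  have hbe : P.add b (P.add a (P.rneg (P.add b a))) = P.one := by
    rw [← P.assoc_eq _ _ _ h1 hDrx, hrx]
  have hc : P.D a (P.rneg (P.add b a)) ∧ P.D c (P.add a (P.rneg (P.add b a))) :=
    (P.assoc_defined c a (P.rneg (P.add b a))).mp ⟨h2, by rw [← h]; exact hDrx⟩
  have hce : P.add c (P.add a (P.rneg (P.add b a))) = P.one := by
    rw [← P.assoc_eq _ _ _ h2 (by rw [← h]; exact hDrx), ← h, hrx]
  rw [lneg_uniq P hb.2 hbe, lneg_uniq P hc.2 hce]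

theorem pos_eq {a b : E} (h : P.D a b) (h0 : P.add a b = P.zero) :
    a = P.zero ∧ b = P.zero := by
  have hD1 : P.D (P.add a b) P.one := by rw [h0]; exact P.D_zero_left P.one
  have hb1 : P.D b P.one ∧ P.D a (P.add b P.one) := (P.assoc_defined a b P.one).mp ⟨h, hD1⟩
  have hb0 : b = P.zero := P.pe4_right b hb1.1
  refine ⟨?_, hb0⟩
  rw [hb0] at h0
  rw [← P.add_zero a, h0]

section Perfect

variable {n : ℕ} {F : ℕ → Set E}

theorem hDtot (hn : 1 ≤ n) (hF : P.IsNPerfect n F) :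
    ∀ a b : E, a ∈ F 0 → b ∈ F 0 → P.D a b := by
  intro a b ha hb
  exact hF.2.1 0 0 (by omega) a ha b hb

theorem hdown (hF : P.IsNPerfect n F) : ∀ a i : E, i ∈ F 0 → P.le a i → a ∈ F 0 :=
  hF.2.2.1.1.2.1

theorem hadd_mem (hn : 1 ≤ n) (hF : P.IsNPerfect n F) :
    ∀ a b : E, a ∈ F 0 → b ∈ F 0 → P.add a b ∈ F 0 := by
  intro a b ha hb
  exact (hF.1.2.2.2.2 0 0 (Nat.zero_le n) (Nat.zero_le n) a ha b hb
    (hDtot P hn hF a b ha hb)).2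

theorem hzero_mem (hF : P.IsNPerfect n F) : P.zero ∈ F 0 := by
  obtain ⟨x, hx⟩ := hF.2.2.1.1.1
  exact hdown P hF P.zero x hx ⟨x, P.D_zero_left x, P.zero_add x⟩

theorem hconj1 (hn : 1 ≤ n) (hF : P.IsNPerfect n F) : ∀ a b : E, a ∈ F 0 → b ∈ F 0 →
    ∃ d, d ∈ F 0 ∧ P.D d a ∧ P.add d a = P.add a b := by
  intro a b ha hb
  obtain ⟨d, hDda, hd⟩ := (P.pe3 a b (hDtot P hn hF a b ha hb)).1
  refine ⟨d, ?_, hDda, hd⟩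
  exact hdown P hF d _ (hadd_mem P hn hF a b ha hb) ⟨a, hDda, hd⟩

theorem hconj2 (hn : 1 ≤ n) (hF : P.IsNPerfect n F) : ∀ a b : E, a ∈ F 0 → b ∈ F 0 →
    ∃ e, e ∈ F 0 ∧ P.D a e ∧ P.add a e = P.add b a := by
  intro a b ha hb
  obtain ⟨e, hDae, he⟩ := (P.pe3 b a (hDtot P hn hF b a hb ha)).2
  obtain ⟨e', hDee', he'⟩ := (P.pe3 a e hDae).2
  refine ⟨e, ?_, hDae, he⟩
  exact hdown P hF e _ (hadd_mem P hn hF b a hb ha) ⟨e', hDee', by rw [he', he]⟩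

end Perfect

/-- The monoid `E₀`. -/
def M0 (n : ℕ) (F : ℕ → Set E) (_hn : 1 ≤ n) (_hF : P.IsNPerfect n F) : Type :=
  {x : E // x ∈ F 0}

variable {n : ℕ} {F : ℕ → Set E} (hn : 1 ≤ n) (hF : P.IsNPerfect n F)

instance : Monoid (M0 P n F hn hF) where
  mul a b := ⟨P.add a.1 b.1, hadd_mem P hn hF a.1 b.1 a.2 b.2⟩
  one := ⟨P.zero, hzero_mem P hF⟩
  mul_assoc a b c := Subtype.ext <| by
    exact P.assoc_eq a.1 b.1 c.1 (hDtot P hn hF _ _ a.2 b.2)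
      (hDtot P hn hF _ _ (hadd_mem P hn hF _ _ a.2 b.2) c.2)
  one_mul a := Subtype.ext (P.zero_add a.1)
  mul_one a := Subtype.ext (P.add_zero a.1)

theorem mul_val (a b : M0 P n F hn hF) : (a * b).1 = P.add a.1 b.1 := rfl

theorem one_val : (1 : M0 P n F hn hF).1 = P.zero := rfl

theorem mcancel_left {a b c : M0 P n F hn hF} (h : a * b = a * c) : b = c :=
  Subtype.ext <| cancel_left P (hDtot P hn hF _ _ a.2 b.2)
    (hDtot P hn hF _ _ a.2 c.2) (congrArg Subtype.val h)

theorem mcancel_right {a b c : M0 P n F hn hF} (h : b * a = c * a) : b = c :=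
  Subtype.ext <| cancel_right P (hDtot P hn hF _ _ b.2 a.2)
    (hDtot P hn hF _ _ c.2 a.2) (congrArg Subtype.val h)

theorem mpos {a b : M0 P n F hn hF} (h : a * b = 1) : a = 1 ∧ b = 1 := by
  have := pos_eq P (hDtot P hn hF _ _ a.2 b.2) (congrArg Subtype.val h)
  exact ⟨Subtype.ext this.1, Subtype.ext this.2⟩

theorem mc1 (a b : M0 P n F hn hF) : ∃ d : M0 P n F hn hF, d * a = a * b := by
  obtain ⟨d, hd0, _, hd⟩ := hconj1 P hn hF a.1 b.1 a.2 b.2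
  exact ⟨⟨d, hd0⟩, Subtype.ext hd⟩

theorem mc2 (a b : M0 P n F hn hF) : ∃ e : M0 P n F hn hF, a * e = b * a := by
  obtain ⟨e, he0, _, he⟩ := hconj2 P hn hF a.1 b.1 a.2 b.2
  exact ⟨⟨e, he0⟩, Subtype.ext he⟩

noncomputable instance : OreLocalization.OreSet (⊤ : Submonoid (M0 P n F hn hF)) where
  ore_right_cancel r₁ r₂ s h := ⟨1, by
    simp only [OneMemClass.coe_one, one_mul]
    exact mcancel_right P hn hF h⟩
  oreNum r _ := r
  oreDenom r s := ⟨(mc1 P hn hF r s.1).choose, trivial⟩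
  ore_eq r s := (mc1 P hn hF r s.1).choose_spec

/-- The Ore localization group. -/
abbrev G0 := OreLocalization (⊤ : Submonoid (M0 P n F hn hF)) (M0 P n F hn hF)

/-- The canonical map. -/
noncomputable def iota : M0 P n F hn hF →* G0 P hn hF := OreLocalization.numeratorHom

theorem iota_inj : Function.Injective (iota P hn hF) := by
  intro r r' h
  rw [iota, OreLocalization.numeratorHom_apply, OreLocalization.numeratorHom_apply,
    OreLocalization.oreDiv_eq_iff] at h
  obtain ⟨u, v, h1, h2⟩ := h
  simp only [OneMemClass.coe_one, mul_one, Submonoid.smul_def, smul_eq_mul] at h1 h2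
  rw [← h2] at h1
  exact (mcancel_left P hn hF h1).symm

theorem hrep (g : G0 P hn hF) :
    ∃ (r s : M0 P n F hn hF), iota P hn hF s * g = iota P hn hF r := by
  induction g using OreLocalization.ind with
  | _ r s =>
    refine ⟨r, s.1, ?_⟩
    rw [iota, OreLocalization.numeratorHom_apply, OreLocalization.numeratorHom_apply]
    exact OreLocalization.mul_cancel

theorem hunit (x : G0 P hn hF) : IsUnit x := by
  induction x using OreLocalization.ind with
  | _ r s =>
    exact ⟨⟨r /ₒ s, s.1 /ₒ ⟨r, Submonoid.mem_top r⟩,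
      OreLocalization.mul_inv ⟨r, Submonoid.mem_top r⟩ s, OreLocalization.mul_inv s ⟨r, Submonoid.mem_top r⟩⟩, rfl⟩

noncomputable instance : Group (G0 P hn hF) :=
  { (inferInstance : Monoid (G0 P hn hF)) with
    inv := fun x => ((hunit P hn hF x).unit⁻¹ : _)
    inv_mul_cancel := fun a => by
      change ((hunit P hn hF a).unit⁻¹ : _) * a = 1
      conv_lhs => rw [← (hunit P hn hF a).unit_spec]
      exact Units.inv_mul _ }

theorem hconjG (g : G0 P hn hF) (m : M0 P n F hn hF) :
    ∃ m' : M0 P n F hn hF, g * iota P hn hF m * g⁻¹ = iota P hn hF m' := by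
  obtain ⟨r, s, hrs⟩ := hrep P hn hF g
  have hg : g = (iota P hn hF s)⁻¹ * iota P hn hF r := eq_inv_mul_iff_mul_eq.mpr hrs
  obtain ⟨d, hd⟩ := mc1 P hn hF r m
  obtain ⟨e, he⟩ := mc2 P hn hF s d
  have h1 : iota P hn hF r * iota P hn hF m = iota P hn hF d * iota P hn hF r := by
    rw [← map_mul, ← map_mul, hd]
  have h2 : iota P hn hF d * iota P hn hF s = iota P hn hF s * iota P hn hF e := by
    rw [← map_mul, ← map_mul, he]
  refine ⟨e, ?_⟩
  rw [hg]
  calc (iota P hn hF s)⁻¹ * iota P hn hF r * iota P hn hF m *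
        ((iota P hn hF s)⁻¹ * iota P hn hF r)⁻¹
      = (iota P hn hF s)⁻¹ * ((iota P hn hF r * iota P hn hF m) * (iota P hn hF r)⁻¹ *
          iota P hn hF s) := by group
    _ = (iota P hn hF s)⁻¹ * ((iota P hn hF d * iota P hn hF r) * (iota P hn hF r)⁻¹ *
          iota P hn hF s) := by rw [h1]
    _ = (iota P hn hF s)⁻¹ * (iota P hn hF d * iota P hn hF s) := by group
    _ = (iota P hn hF s)⁻¹ * (iota P hn hF s * iota P hn hF e) := by rw [h2]
    _ = iota P hn hF e := by group

/-- The order relation on `G0`. -/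
def leG (g h : G0 P hn hF) : Prop :=
  ∃ m : M0 P n F hn hF, g⁻¹ * h = iota P hn hF m

theorem leG_refl (g : G0 P hn hF) : leG P hn hF g g :=
  ⟨1, by rw [inv_mul_cancel, map_one]⟩

theorem leG_trans {g h k : G0 P hn hF} (h1 : leG P hn hF g h) (h2 : leG P hn hF h k) :
    leG P hn hF g k := by
  obtain ⟨m, hm⟩ := h1
  obtain ⟨m', hm'⟩ := h2
  exact ⟨m * m', by rw [map_mul, ← hm, ← hm']; group⟩

theorem leG_antisymm {g h : G0 P hn hF} (h1 : leG P hn hF g h) (h2 : leG P hn hF h g) :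
    g = h := by
  obtain ⟨m, hm⟩ := h1
  obtain ⟨m', hm'⟩ := h2
  have hmm : m * m' = 1 := by
    apply iota_inj P hn hF
    rw [map_mul, map_one, ← hm, ← hm']
    group
  have := (mpos P hn hF hmm).1
  rw [this, map_one] at hm
  exact inv_mul_eq_one.mp hm

theorem leG_mul_left (c : G0 P hn hF) {g h : G0 P hn hF} (hle : leG P hn hF g h) :
    leG P hn hF (c * g) (c * h) := by
  obtain ⟨m, hm⟩ := hle
  exact ⟨m, by rw [← hm]; group⟩

theorem leG_mul_right (c : G0 P hn hF) {g h : G0 P hn hF} (hle : leG P hn hF g h) :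
    leG P hn hF (g * c) (h * c) := by
  obtain ⟨m, hm⟩ := hle
  obtain ⟨m', hm'⟩ := hconjG P hn hF c⁻¹ m
  refine ⟨m', ?_⟩
  rw [← hm', ← hm]
  group

theorem hub (g : G0 P hn hF) : ∃ r : M0 P n F hn hF, leG P hn hF g (iota P hn hF r) := by
  obtain ⟨r, s, hrs⟩ := hrep P hn hF g
  have hg : g = (iota P hn hF s)⁻¹ * iota P hn hF r := eq_inv_mul_iff_mul_eq.mpr hrs
  obtain ⟨m', hm'⟩ := hconjG P hn hF (iota P hn hF r)⁻¹ s
  refine ⟨r, m', ?_⟩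
  rw [hg, ← hm', inv_inv]
  group

/-- The partial order on `Additive G0`. -/
def poG : PartialOrder (Additive (G0 P hn hF)) where
  le a b := leG P hn hF a.toMul b.toMul
  le_refl a := leG_refl P hn hF _
  le_trans a b c h1 h2 := leG_trans P hn hF h1 h2
  le_antisymm a b h1 h2 := Additive.toMul.injective (leG_antisymm P hn hF h1 h2)

open Classical in
/-- The map from `E` to the po-group. -/
noncomputable def phi (x : E) : Additive (G0 P hn hF) :=
  Additive.ofMul (if h : x ∈ F 0 then iota P hn hF ⟨x, h⟩ else 1)

theorem phi_mem {x : E} (h : x ∈ F 0) :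
    phi P hn hF x = Additive.ofMul (iota P hn hF ⟨x, h⟩) := by
  rw [phi, dif_pos h]

section Unique

variable {G' : Type} [AddGroup G'] (φ' : E → G')

/-- The induced monoid hom `E₀ →* Multiplicative G'`. -/
def fhom (hzero' : φ' P.zero = 0)
    (hadd' : ∀ a b, a ∈ F 0 → b ∈ F 0 → φ' (P.add a b) = φ' a + φ' b) :
    M0 P n F hn hF →* Multiplicative G' where
  toFun m := Multiplicative.ofAdd (φ' m.1)
  map_one' := by
    show Multiplicative.ofAdd (φ' P.zero) = 1
    rw [hzero']
    rfl
  map_mul' a b := by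
    show Multiplicative.ofAdd (φ' (P.add a.1 b.1)) = _
    rw [hadd' a.1 b.1 a.2 b.2]
    rfl

variable (hzero' : φ' P.zero = 0)
  (hadd' : ∀ a b, a ∈ F 0 → b ∈ F 0 → φ' (P.add a b) = φ' a + φ' b)

/-- The induced hom on the Ore localization. -/
noncomputable def psi0 : G0 P hn hF →* Multiplicative G' :=
  OreLocalization.universalMulHom (fhom P hn hF φ' hzero' hadd')
    ((toUnits : Multiplicative G' ≃* (Multiplicative G')ˣ).toMonoidHom.comp
      ((fhom P hn hF φ' hzero' hadd').comp (Submonoid.subtype ⊤)))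
    (fun _ => rfl)

theorem psi0_comm (m : M0 P n F hn hF) :
    psi0 P hn hF φ' hzero' hadd' (iota P hn hF m) = fhom P hn hF φ' hzero' hadd' m :=
  OreLocalization.universalMulHom_commutes _ _ _

theorem psi0_inj (hinj' : Set.InjOn φ' (F 0)) :
    Function.Injective (psi0 P hn hF φ' hzero' hadd') := by
  rw [injective_iff_map_eq_one]
  intro g hg
  obtain ⟨r, s, hrs⟩ := hrep P hn hF g
  have h1 : psi0 P hn hF φ' hzero' hadd' (iota P hn hF s) * psi0 P hn hF φ' hzero' hadd' g =
      psi0 P hn hF φ' hzero' hadd' (iota P hn hF r) := by rw [← map_mul, hrs]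
  rw [hg, mul_one, psi0_comm, psi0_comm] at h1
  have hsr : s = r :=
    Subtype.ext (hinj' s.2 r.2 (congrArg Multiplicative.toAdd h1))
  rw [hsr] at hrs
  exact mul_left_cancel (hrs.trans (mul_one (iota P hn hF r)).symm)

/-- The induced additive hom. -/
noncomputable def psiadd : Additive (G0 P hn hF) →+ G' :=
  AddMonoidHom.mk'
    (fun g => Multiplicative.toAdd (psi0 P hn hF φ' hzero' hadd' (Additive.toMul g)))
    (fun a b => congrArg Multiplicative.toAdd
      (map_mul (psi0 P hn hF φ' hzero' hadd') a.toMul b.toMul))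

theorem psiadd_phi {a : E} (ha : a ∈ F 0) :
    psiadd P hn hF φ' hzero' hadd' (phi P hn hF a) = φ' a := by
  rw [phi_mem P hn hF ha]
  show Multiplicative.toAdd (psi0 P hn hF φ' hzero' hadd'
    (Additive.toMul (Additive.ofMul (iota P hn hF ⟨a, ha⟩)))) = φ' a
  rw [toMul_ofMul, psi0_comm P hn hF φ' hzero' hadd' ⟨a, ha⟩]
  rfl

end Unique

end Stmt14Aux

open Stmt14Aux in
/-- in an `n`-perfect PEA, `(E₀; +, 0)` is the positive cone of a
directed po-group `G`, unique up to isomorphism. -/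
theorem stmt14 {E : Type} (P : PEA E) (n : ℕ) (hn : 1 ≤ n) (F : ℕ → Set E)
    (hF : P.IsNPerfect n F) :
    ∃ (G : Type) (_ : AddGroup G) (_ : PartialOrder G)
      (_ : CovariantClass G G (· + ·) (· ≤ ·))
      (_ : CovariantClass G G (Function.swap (· + ·)) (· ≤ ·))
      (φ : E → G),
      (∀ a b : G, ∃ c : G, a ≤ c ∧ b ≤ c) ∧
      Set.InjOn φ (F 0) ∧ φ '' F 0 = {g : G | 0 ≤ g} ∧ φ P.zero = 0 ∧
      (∀ a b, a ∈ F 0 → b ∈ F 0 → φ (P.add a b) = φ a + φ b) ∧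
      (∀ a b, a ∈ F 0 → b ∈ F 0 → (P.le a b ↔ φ a ≤ φ b)) ∧
      ∀ (G' : Type) (_ : AddGroup G') (_ : PartialOrder G')
        (_ : CovariantClass G' G' (· + ·) (· ≤ ·))
        (_ : CovariantClass G' G' (Function.swap (· + ·)) (· ≤ ·))
        (φ' : E → G'),
        (∀ a b : G', ∃ c : G', a ≤ c ∧ b ≤ c) →
        Set.InjOn φ' (F 0) → φ' '' F 0 = {g : G' | 0 ≤ g} → φ' P.zero = 0 →
        (∀ a b, a ∈ F 0 → b ∈ F 0 → φ' (P.add a b) = φ' a + φ' b) →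
        (∀ a b, a ∈ F 0 → b ∈ F 0 → (P.le a b ↔ φ' a ≤ φ' b)) →
        ∃ ψ : G ≃+ G', (∀ x y : G, x ≤ y ↔ ψ x ≤ ψ y) ∧
          ∀ a ∈ F 0, ψ (φ a) = φ' a := by
  classical
  refine ⟨Additive (G0 P hn hF), inferInstance, poG P hn hF, ⟨?_⟩, ⟨?_⟩, phi P hn hF,
    ?_, ?_, ?_, ?_, ?_, ?_, ?_⟩
  · -- left covariance
    intro c a b h
    exact leG_mul_left P hn hF c.toMul h
  · -- right covariance
    intro c a b h
    exact leG_mul_right P hn hF c.toMul h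
  · -- directedness
    intro a b
    obtain ⟨ra, hra⟩ := hub P hn hF a.toMul
    obtain ⟨rb, hrb⟩ := hub P hn hF b.toMul
    refine ⟨Additive.ofMul (iota P hn hF ra * iota P hn hF rb), ?_, ?_⟩
    · refine leG_trans P hn hF hra ⟨rb, ?_⟩
      rw [toMul_ofMul, inv_mul_cancel_left]
    · refine leG_trans P hn hF hrb ?_
      obtain ⟨m', hm'⟩ := hconjG P hn hF (iota P hn hF rb)⁻¹ ra
      refine ⟨m', ?_⟩
      rw [toMul_ofMul, ← hm', inv_inv]
      group
  · -- injectivity on F 0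
    intro a ha b hb h
    rw [phi_mem P hn hF ha, phi_mem P hn hF hb] at h
    have := iota_inj P hn hF (Additive.ofMul.injective h)
    exact congrArg Subtype.val this
  · -- image is the positive cone
    ext g
    constructor
    · rintro ⟨a, ha, rfl⟩
      refine ⟨⟨a, ha⟩, ?_⟩
      rw [phi_mem P hn hF ha]
      show (Additive.toMul (0 : Additive (G0 P hn hF)))⁻¹ * iota P hn hF ⟨a, ha⟩ = _
      rw [toMul_zero, inv_one, one_mul]
    · rintro ⟨m, hm⟩
      refine ⟨m.1, m.2, ?_⟩
      rw [phi_mem P hn hF m.2]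
      rw [show (Additive.toMul (0 : Additive (G0 P hn hF)))⁻¹ = 1 by
        rw [toMul_zero, inv_one], one_mul] at hm
      show Additive.ofMul (iota P hn hF m) = g
      rw [← hm]
      rfl
  · -- phi zero = 0
    rw [phi_mem P hn hF (hzero_mem P hF)]
    have h1 : iota P hn hF ⟨P.zero, hzero_mem P hF⟩ = 1 := map_one (iota P hn hF)
    rw [h1]
    rfl
  · -- additivity
    intro a b ha hb
    rw [phi_mem P hn hF ha, phi_mem P hn hF hb,
      phi_mem P hn hF (hadd_mem P hn hF a b ha hb)]
    have h1 : iota P hn hF ⟨P.add a b, hadd_mem P hn hF a b ha hb⟩ =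
        iota P hn hF ⟨a, ha⟩ * iota P hn hF ⟨b, hb⟩ :=
      map_mul (iota P hn hF) ⟨a, ha⟩ ⟨b, hb⟩
    rw [h1]
    rfl
  · -- order embedding
    intro a b ha hb
    constructor
    · rintro ⟨c, hD, hc⟩
      obtain ⟨e, hDce, he⟩ := (P.pe3 a c hD).2
      have hc0 : c ∈ F 0 := hdown P hF c b hb ⟨e, hDce, by rw [he, hc]⟩
      refine ⟨⟨c, hc0⟩, ?_⟩
      rw [phi_mem P hn hF ha, phi_mem P hn hF hb]
      show (iota P hn hF ⟨a, ha⟩)⁻¹ * iota P hn hF ⟨b, hb⟩ = _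
      rw [inv_mul_eq_iff_eq_mul, ← map_mul (iota P hn hF) ⟨a, ha⟩ ⟨c, hc0⟩]
      congr 1
      exact Subtype.ext hc.symm
    · rintro ⟨m, hm⟩
      rw [phi_mem P hn hF ha, phi_mem P hn hF hb] at hm
      replace hm : (iota P hn hF ⟨a, ha⟩)⁻¹ * iota P hn hF ⟨b, hb⟩ = iota P hn hF m := hm
      rw [inv_mul_eq_iff_eq_mul, ← map_mul (iota P hn hF) ⟨a, ha⟩ m] at hm
      have := iota_inj P hn hF hm
      exact ⟨m.1, hDtot P hn hF a m.1 ha m.2, (congrArg Subtype.val this).symm⟩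
  · -- uniqueness
    intro G' ag' po' cov1' cov2' φ' hdir' hinj' himg' hzero' hadd' hle'
    have le0' : ∀ a b : G', a ≤ b ↔ (0 : G') ≤ -a + b := by
      intro a b
      constructor
      · intro h
        have := add_le_add_left h (-a)
        simpa using this
      · intro h
        have := add_le_add_left h a
        simpa using this
    have hinj : Function.Injective (psiadd P hn hF φ' hzero' hadd') := by
      intro x y h
      have := psi0_inj P hn hF φ' hzero' hadd' hinj'
        (Multiplicative.toAdd.injective h)
      exact Additive.toMul.injective this
    have hsurj : Function.Surjective (psiadd P hn hF φ' hzero' hadd') := by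
      intro g'
      obtain ⟨c, hc0, hcg⟩ := hdir' 0 g'
      have hc : c ∈ {x : G' | 0 ≤ x} := hc0
      rw [← himg'] at hc
      obtain ⟨a, haF, hac⟩ := hc
      have h2 : -g' + c ∈ {x : G' | 0 ≤ x} := (le0' g' c).mp hcg
      rw [← himg'] at h2
      obtain ⟨b, hbF, hbc⟩ := h2
      refine ⟨phi P hn hF a - phi P hn hF b, ?_⟩
      rw [map_sub, psiadd_phi P hn hF φ' hzero' hadd' haF,
        psiadd_phi P hn hF φ' hzero' hadd' hbF, hac, hbc,
        sub_eq_add_neg, neg_add_rev, neg_neg, add_neg_cancel_left]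
    refine ⟨AddEquiv.ofBijective (psiadd P hn hF φ' hzero' hadd') ⟨hinj, hsurj⟩, ?_, ?_⟩
    · intro x y
      have hψ : ∀ z, AddEquiv.ofBijective (psiadd P hn hF φ' hzero' hadd') ⟨hinj, hsurj⟩ z =
          psiadd P hn hF φ' hzero' hadd' z := fun z => rfl
      rw [hψ, hψ, le0']
      have hsum : -psiadd P hn hF φ' hzero' hadd' x + psiadd P hn hF φ' hzero' hadd' y =
          psiadd P hn hF φ' hzero' hadd' (-x + y) := by rw [map_add, map_neg]
      rw [hsum]
      constructor
      · rintro ⟨m, hm⟩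
        have key : psiadd P hn hF φ' hzero' hadd' (-x + y) = φ' m.1 := by
          show Multiplicative.toAdd (psi0 P hn hF φ' hzero' hadd'
            (Additive.toMul (-x + y))) = φ' m.1
          have h3 : Additive.toMul (-x + y) =
              (Additive.toMul x)⁻¹ * Additive.toMul y := rfl
          rw [h3, hm, psi0_comm]
          rfl
        rw [key]
        have : φ' m.1 ∈ {g : G' | 0 ≤ g} := by rw [← himg']; exact ⟨m.1, m.2, rfl⟩
        exact this
      · intro h0
        have h2 : psiadd P hn hF φ' hzero' hadd' (-x + y) ∈ {g : G' | 0 ≤ g} := h0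
        rw [← himg'] at h2
        obtain ⟨m, hmF, hmv⟩ := h2
        refine ⟨⟨m, hmF⟩, ?_⟩
        apply psi0_inj P hn hF φ' hzero' hadd' hinj'
        rw [psi0_comm P hn hF φ' hzero' hadd' ⟨m, hmF⟩]
        apply Multiplicative.toAdd.injective
        show Multiplicative.toAdd (psi0 P hn hF φ' hzero' hadd'
          ((Additive.toMul x)⁻¹ * Additive.toMul y)) = φ' m
        have h3 : (Additive.toMul x)⁻¹ * Additive.toMul y =
            Additive.toMul (-x + y) := rfl
        rw [h3]
        exact hmv.symm
    · intro a haF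
      exact psiadd_phi P hn hF φ' hzero' hadd' haF
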